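/- Let P(q) = ∑_{j=0}^n q^j a_j be a quaternionic polynomial of degree n (so a_n ≠ 0). Suppose there exists I ∈ 𝕊 such that every coefficient a_j lies in the plane ℂ_I = {x + yI : x, y ∈ ℝ}, and such that P(z) ≠ 0 for every z ∈ ℂ_I with |z| < 1. Then max_{|q| ≤ 1} |P'(q)| ≤ (n/2) · max_{|q| ≤ 1} |P(q)|. -/

import Mathlib

open Quaternion Polynomial

/-! ### Auxiliary lemmas on quaternions and slices -/

private lemma el_unit_comp (J : ℍ[ℝ]) (hJ : J^2 = -1) :
    J.re = 0 ∧ J.imI^2 + J.imJ^2 + J.imK^2 = 1 := by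
  have h1 := congrArg QuaternionAlgebra.re hJ
  have h2 := congrArg QuaternionAlgebra.imI hJ
  have h3 := congrArg QuaternionAlgebra.imJ hJ
  have h4 := congrArg QuaternionAlgebra.imK hJ
  simp [pow_two, Quaternion.re_mul, Quaternion.imI_mul, Quaternion.imJ_mul,
    Quaternion.imK_mul] at h1 h2 h3 h4
  have hre : J.re = 0 := by
    by_contra h
    have hi : J.imI = 0 := by
      have : J.re * J.imI = 0 := by linarith
      exact (mul_eq_zero.1 this).resolve_left h
    have hj : J.imJ = 0 := by
      have : J.re * J.imJ = 0 := by linarith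
      exact (mul_eq_zero.1 this).resolve_left h
    have hk : J.imK = 0 := by
      have : J.re * J.imK = 0 := by linarith
      exact (mul_eq_zero.1 this).resolve_left h
    nlinarith
  exact ⟨hre, by nlinarith⟩

private lemma el_unit_of_comp (J : ℍ[ℝ]) (h0 : J.re = 0)
    (h1 : J.imI^2 + J.imJ^2 + J.imK^2 = 1) : J^2 = -1 := by
  ext <;>
    simp [pow_two, Quaternion.re_mul, Quaternion.imI_mul, Quaternion.imJ_mul,
      Quaternion.imK_mul, h0] <;>
    linarith

/-- The embedding of `ℂ` into the slice `ℂ_J` of the quaternions. -/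
noncomputable def elSlq (J : ℍ[ℝ]) (z : ℂ) : ℍ[ℝ] := (z.re : ℍ[ℝ]) + z.im • J

private lemma elSlq_coe (J : ℍ[ℝ]) (x : ℝ) : elSlq J (x : ℂ) = (x : ℍ[ℝ]) := by simp [elSlq]

private lemma elSlq_mul (J : ℍ[ℝ]) (hJ : J^2 = -1) (z w : ℂ) :
    elSlq J (z * w) = elSlq J z * elSlq J w := by
  obtain ⟨h0, h1⟩ := el_unit_comp J hJ
  have slq_re : ∀ u : ℂ, (elSlq J u).re = u.re + u.im * J.re := by intro u; simp [elSlq]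
  have slq_imI : ∀ u : ℂ, (elSlq J u).imI = u.im * J.imI := by intro u; simp [elSlq]
  have slq_imJ : ∀ u : ℂ, (elSlq J u).imJ = u.im * J.imJ := by intro u; simp [elSlq]
  have slq_imK : ∀ u : ℂ, (elSlq J u).imK = u.im * J.imK := by intro u; simp [elSlq]
  ext
  · simp [slq_re, slq_imI, slq_imJ, slq_imK, Quaternion.re_mul, Complex.mul_re,
      Complex.mul_im, h0]
    linear_combination (z.im * w.im) * h1
  · simp [slq_re, slq_imI, slq_imJ, slq_imK, Quaternion.imI_mul, Complex.mul_re,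
      Complex.mul_im, h0]
    ring
  · simp [slq_re, slq_imI, slq_imJ, slq_imK, Quaternion.imJ_mul, Complex.mul_re,
      Complex.mul_im, h0]
    ring
  · simp [slq_re, slq_imI, slq_imJ, slq_imK, Quaternion.imK_mul, Complex.mul_re,
      Complex.mul_im, h0]
    ring

private lemma elSlq_pow (J : ℍ[ℝ]) (hJ : J^2 = -1) (z : ℂ) (k : ℕ) :
    elSlq J (z ^ k) = elSlq J z ^ k := by
  induction k with
  | zero => simp [elSlq]
  | succ m ih => rw [pow_succ, pow_succ, elSlq_mul J hJ, ih]

private lemma elSlq_add (J : ℍ[ℝ]) (z w : ℂ) :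
    elSlq J (z + w) = elSlq J z + elSlq J w := by
  simp only [elSlq, Complex.add_re, Complex.add_im, Quaternion.coe_add, add_smul]
  abel

private lemma elSlq_sum (J : ℍ[ℝ]) (s : Finset ℕ) (f : ℕ → ℂ) :
    elSlq J (∑ k ∈ s, f k) = ∑ k ∈ s, elSlq J (f k) := by
  classical
  induction s using Finset.induction_on with
  | empty => simp [elSlq]
  | insert _ _ h ih => rw [Finset.sum_insert h, Finset.sum_insert h, elSlq_add, ih]

private lemma el_normSq_slq (J : ℍ[ℝ]) (hJ : J^2 = -1) (z : ℂ) :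
    normSq (elSlq J z) = Complex.normSq z := by
  obtain ⟨h0, h1⟩ := el_unit_comp J hJ
  rw [Quaternion.normSq_def', Complex.normSq_apply]
  simp [elSlq, h0]
  linear_combination (z.im^2) * h1

private lemma el_norm_slq (J : ℍ[ℝ]) (hJ : J^2 = -1) (z : ℂ) :
    ‖elSlq J z‖ = ‖z‖ := by
  have h2 : ‖elSlq J z‖^2 = ‖z‖ ^ 2 := by
    rw [sq, ← Quaternion.normSq_eq_norm_mul_self, el_normSq_slq J hJ z, Complex.sq_norm]
  rw [← Real.sqrt_sq (norm_nonneg _), ← Real.sqrt_sq (norm_nonneg z), h2]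

private lemma el_norm_le_of_normSq_le {a b : ℍ[ℝ]} (h : normSq a ≤ normSq b) : ‖a‖ ≤ ‖b‖ := by
  nlinarith [norm_nonneg a, norm_nonneg b, Quaternion.normSq_eq_norm_mul_self a,
    Quaternion.normSq_eq_norm_mul_self b]

private lemma el_key_convex (I J : ℍ[ℝ]) (hI : I^2 = -1) (hJ : J^2 = -1) (c₀ c₁ d₀ d₁ : ℝ)
    (c d : ℍ[ℝ]) (hc : c = (c₀ : ℍ[ℝ]) + c₁ • I) (hd : d = (d₀ : ℍ[ℝ]) + d₁ • I) :
    ‖c + J * d‖ ≤ max ‖c + I * d‖ ‖c - I * d‖ := by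
  obtain ⟨hI0, hI1⟩ := el_unit_comp I hI
  obtain ⟨hJ0, hJ1⟩ := el_unit_comp J hJ
  set t : ℝ := I.imI * J.imI + I.imJ * J.imJ + I.imK * J.imK with ht_def
  have hprod : (I.imI^2+I.imJ^2+I.imK^2) * (J.imI^2+J.imJ^2+J.imK^2) = 1 := by
    rw [hI1, hJ1]; norm_num
  have ht : (I.imI * J.imI + I.imJ * J.imJ + I.imK * J.imK) ^ 2 ≤ 1 := by
    nlinarith [hprod, sq_nonneg (I.imI*J.imJ - I.imJ*J.imI), sq_nonneg (I.imI*J.imK - I.imK*J.imI),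
      sq_nonneg (I.imJ*J.imK - I.imK*J.imJ)]
  rw [← ht_def] at ht
  have ht1 : -1 ≤ t := by nlinarith
  have ht2 : t ≤ 1 := by nlinarith
  have hmain : normSq (c + J * d) =
      (1+t)/2 * normSq (c + I * d) + (1-t)/2 * normSq (c - I * d) := by
    subst hc hd
    rw [Quaternion.normSq_def', Quaternion.normSq_def', Quaternion.normSq_def']
    simp [Quaternion.re_mul, Quaternion.imI_mul, Quaternion.imJ_mul, Quaternion.imK_mul,
      hI0, hJ0]
    ring_nf
    linear_combination (d₀^2 + d₁^2*(I.imI^2+I.imJ^2+I.imK^2)) * hJ1 -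
      (d₀^2 + d₁^2*(I.imI^2+I.imJ^2+I.imK^2) + 2*t*(c₁*d₀ - c₀*d₁)) * hI1
  rcases le_total (normSq (c - I*d)) (normSq (c + I*d)) with h | h
  · exact le_trans (el_norm_le_of_normSq_le (by rw [hmain]; nlinarith)) (le_max_left _ _)
  · exact le_trans (el_norm_le_of_normSq_le (by rw [hmain]; nlinarith)) (le_max_right _ _)

private lemma el_coe_sum (s : Finset ℕ) (f : ℕ → ℝ) :
    ((∑ k ∈ s, f k : ℝ) : ℍ[ℝ]) = ∑ k ∈ s, (f k : ℍ[ℝ]) := by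
  classical
  induction s using Finset.induction_on with
  | empty => simp
  | insert _ _ h ih => rw [Finset.sum_insert h, Finset.sum_insert h, Quaternion.coe_add, ih]

private lemma el_exists_slq_rep (I : ℍ[ℝ]) (hI : I^2 = -1) (q : ℍ[ℝ]) :
    ∃ (J : ℍ[ℝ]) (ζ : ℂ), J^2 = -1 ∧ q = elSlq J ζ := by
  by_cases h : q.imI = 0 ∧ q.imJ = 0 ∧ q.imK = 0
  · exact ⟨I, ⟨q.re, 0⟩, hI, by ext <;> simp [elSlq, h.1, h.2.1, h.2.2]⟩
  · set y : ℝ := Real.sqrt (q.imI^2 + q.imJ^2 + q.imK^2) with hy_def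
    have hsum : 0 < q.imI^2 + q.imJ^2 + q.imK^2 := by
      rcases not_and_or.1 h with h1 | h2
      · positivity
      rcases not_and_or.1 h2 with h1 | h1 <;> positivity
    have hy : 0 < y := Real.sqrt_pos.2 hsum
    have hy2 : y^2 = q.imI^2 + q.imJ^2 + q.imK^2 := Real.sq_sqrt hsum.le
    refine ⟨⟨0, q.imI/y, q.imJ/y, q.imK/y⟩, ⟨q.re, y⟩, el_unit_of_comp _ rfl ?_, ?_⟩
    · field_simp
      linarith
    · ext <;> simp [elSlq] <;> erw [QuaternionAlgebra.smul_mk] <;> simp <;> field_simp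

private lemma el_sliceBound (I : ℍ[ℝ]) (hI : I^2 = -1) (m : ℕ) (b : ℕ → ℍ[ℝ]) (x y : ℕ → ℝ)
    (hb : ∀ k < m, b k = (x k : ℍ[ℝ]) + (y k) • I) (q : ℍ[ℝ]) :
    ∃ z : ℂ, ‖z‖ = ‖q‖ ∧
      ‖∑ k ∈ Finset.range m, q ^ k * b k‖ ≤
        ‖∑ k ∈ Finset.range m, (elSlq I z) ^ k * b k‖ := by
  obtain ⟨J, ζ, hJ, hq⟩ := el_exists_slq_rep I hI q
  have expand : ∀ (K : ℍ[ℝ]) (w : ℂ),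
      ∑ k ∈ Finset.range m, elSlq K (w^k) * b k =
        (((∑ k ∈ Finset.range m, (w^k).re * x k : ℝ)) : ℍ[ℝ])
          + (∑ k ∈ Finset.range m, (w^k).re * y k) • I
          + K * ((((∑ k ∈ Finset.range m, (w^k).im * x k : ℝ)) : ℍ[ℝ])
          + (∑ k ∈ Finset.range m, (w^k).im * y k) • I) := by
    intro K w
    have hterm : ∀ k ∈ Finset.range m, elSlq K (w^k) * b k =
        (((w^k).re * x k : ℝ) : ℍ[ℝ]) + (((w^k).re * y k : ℝ) : ℍ[ℝ]) * I
        + K * ((((w^k).im * x k : ℝ) : ℍ[ℝ]) + (((w^k).im * y k : ℝ) : ℍ[ℝ]) * I) := by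
      intro k hk
      rw [hb k (Finset.mem_range.1 hk), elSlq]
      ext <;>
        simp [Quaternion.re_mul, Quaternion.imI_mul, Quaternion.imJ_mul,
          Quaternion.imK_mul] <;> ring
    rw [Finset.sum_congr rfl hterm]
    simp only [← Quaternion.coe_mul_eq_smul, Quaternion.coe_mul, el_coe_sum, mul_add,
      Finset.sum_add_distrib, Finset.sum_mul, Finset.mul_sum]
  set c₀ := ∑ k ∈ Finset.range m, (ζ^k).re * x k
  set c₁ := ∑ k ∈ Finset.range m, (ζ^k).re * y k
  set d₀ := ∑ k ∈ Finset.range m, (ζ^k).im * x k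
  set d₁ := ∑ k ∈ Finset.range m, (ζ^k).im * y k
  set C : ℍ[ℝ] := (c₀ : ℍ[ℝ]) + c₁ • I with hC
  set D : ℍ[ℝ] := (d₀ : ℍ[ℝ]) + d₁ • I with hD
  have hsum_q : ∑ k ∈ Finset.range m, q ^ k * b k = C + J * D := by
    rw [hq]
    rw [show ∑ k ∈ Finset.range m, elSlq J ζ ^ k * b k
        = ∑ k ∈ Finset.range m, elSlq J (ζ^k) * b k from
      Finset.sum_congr rfl fun k _ => by rw [elSlq_pow J hJ]]
    rw [expand J ζ]
  have hsum_z : ∑ k ∈ Finset.range m, (elSlq I ζ) ^ k * b k = C + I * D := by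
    rw [show ∑ k ∈ Finset.range m, elSlq I ζ ^ k * b k
        = ∑ k ∈ Finset.range m, elSlq I (ζ^k) * b k from
      Finset.sum_congr rfl fun k _ => by rw [elSlq_pow I hI]]
    rw [expand I ζ]
  have hsum_zbar : ∑ k ∈ Finset.range m, (elSlq I ((starRingEnd ℂ) ζ)) ^ k * b k
      = C - I * D := by
    rw [show ∑ k ∈ Finset.range m, elSlq I ((starRingEnd ℂ) ζ) ^ k * b k
        = ∑ k ∈ Finset.range m, elSlq I (((starRingEnd ℂ) ζ)^k) * b k from
      Finset.sum_congr rfl fun k _ => by rw [elSlq_pow I hI]]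
    rw [expand I ((starRingEnd ℂ) ζ)]
    have e1 : ∀ k : ℕ, (((starRingEnd ℂ) ζ)^k).re = (ζ^k).re := by
      intro k; rw [← map_pow]; exact Complex.conj_re _
    have e2 : ∀ k : ℕ, (((starRingEnd ℂ) ζ)^k).im = -(ζ^k).im := by
      intro k; rw [← map_pow]; exact Complex.conj_im _
    simp only [e1, e2, neg_mul, Finset.sum_neg_distrib, hC, hD]
    simp only [← Quaternion.coe_mul_eq_smul, Quaternion.coe_neg]
    noncomm_ring
  have hmax := el_key_convex I J hI hJ c₀ c₁ d₀ d₁ C D hC hD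
  rcases max_cases ‖C + I * D‖ ‖C - I * D‖ with ⟨he, _⟩ | ⟨he, _⟩
  · exact ⟨ζ, by rw [hq, el_norm_slq J hJ], by rw [hsum_q, hsum_z]; rw [he] at hmax; exact hmax⟩
  · refine ⟨(starRingEnd ℂ) ζ, ?_, ?_⟩
    · rw [hq, el_norm_slq J hJ, Complex.norm_conj]
    · rw [hsum_q, hsum_zbar]; rw [he] at hmax; exact hmax

/-! ### Complex Erdős–Lax theorem -/

private lemma el_single_re_le (z r : ℂ) (hz : ‖z‖ = 1) (hr : 1 ≤ ‖r‖)
    (hzr : z ≠ r) : (z / (z - r)).re ≤ 1 / 2 := by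
  have h0 : Complex.normSq (z - r) ≠ 0 := by
    simpa [Complex.normSq_eq_zero, sub_eq_zero] using hzr
  have h0' : 0 < Complex.normSq (z - r) := lt_of_le_of_ne (Complex.normSq_nonneg _) (Ne.symm h0)
  rw [Complex.div_re, ← add_div, div_le_div_iff₀ h0' (by norm_num : (0:ℝ) < 2)]
  have h1 : z.re^2 + z.im^2 = 1 := by
    have := Complex.sq_norm z
    rw [hz] at this
    rw [Complex.normSq_apply] at this
    nlinarith [this]
  have h2 : 1 ≤ r.re^2 + r.im^2 := by
    have h3 := Complex.sq_norm r
    rw [Complex.normSq_apply] at h3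
    nlinarith [pow_le_pow_left₀ (by norm_num : (0:ℝ) ≤ 1) hr 2]
  simp only [Complex.sub_re, Complex.sub_im, Complex.normSq_apply]
  nlinarith

private lemma el_logDeriv_re_le (z : ℂ) (hz : ‖z‖ = 1) (s : Multiset ℂ)
    (hs : ∀ r ∈ s, 1 ≤ ‖r‖)
    (hg : ((s.map (fun r => X - C r)).prod).eval z ≠ 0) :
    (z * ((s.map (fun r => X - C r)).prod).derivative.eval z /
      ((s.map (fun r => X - C r)).prod).eval z).re ≤ (s.card : ℝ) / 2 := by
  induction s using Multiset.induction_on with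
  | empty => simp
  | cons r t ih =>
    rw [Multiset.map_cons, Multiset.prod_cons] at hg ⊢
    set g := (t.map (fun r => X - C r)).prod with hgdef
    rw [eval_mul] at hg
    have hz_r : (X - C r).eval z ≠ 0 := fun h => hg (by rw [h, zero_mul])
    have hgz : g.eval z ≠ 0 := fun h => hg (by rw [h, mul_zero])
    have hne : z ≠ r := by simpa [sub_eq_zero] using hz_r
    have hzr' : z - r ≠ 0 := sub_ne_zero.2 hne
    rw [derivative_mul, derivative_sub, derivative_X, derivative_C, sub_zero]
    simp only [eval_mul, eval_add, eval_sub, eval_X, eval_C, eval_one, one_mul]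
    have split : z * (g.eval z + (z - r) * g.derivative.eval z) / ((z - r) * g.eval z)
        = z / (z - r) + z * g.derivative.eval z / g.eval z := by
      field_simp
    rw [split, Complex.add_re]
    have h1 := el_single_re_le z r hz (hs r (Multiset.mem_cons_self r t)) hne
    have h2 := ih (fun r' hr' => hs r' (Multiset.mem_cons_of_mem hr')) hgz
    rw [Multiset.card_cons]
    push_cast
    linarith

private lemma el_lemA (n : ℕ) (f : ℂ[X]) (hd : f.natDegree = n) (hf : f ≠ 0)
    (hr : ∀ r ∈ f.roots, 1 ≤ ‖r‖) (z : ℂ) (hz : ‖z‖ = 1) :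
    ‖f.derivative.eval z‖ ≤
      ‖(n:ℂ) * f.eval z - z * f.derivative.eval z‖ := by
  by_cases hfz : f.eval z = 0
  · rw [hfz, mul_zero, zero_sub, norm_neg, norm_mul, hz]
    simp
  · set w : ℂ := z * f.derivative.eval z / f.eval z with hw
    have hsplit : Splits f := IsAlgClosed.splits f
    have hfact : f = C f.leadingCoeff * (f.roots.map (fun r => X - C r)).prod :=
      hsplit.eq_prod_roots
    have hcard : Multiset.card f.roots = n := by
      have h := hsplit.natDegree_eq_card_roots
      rw [← hd, h]
    have hL : f.leadingCoeff ≠ 0 := leadingCoeff_ne_zero.2 hf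
    set g := (f.roots.map (fun r => X - C r)).prod with hgdef
    have hfeval : f.eval z = f.leadingCoeff * g.eval z := by
      conv_lhs => rw [hfact]
      rw [eval_mul, eval_C]
    have hgz : g.eval z ≠ 0 := by
      intro h
      exact hfz (by rw [hfeval, h, mul_zero])
    have hderiv : f.derivative = C f.leadingCoeff * g.derivative := by
      conv_lhs => rw [hfact]
      rw [derivative_mul, derivative_C, zero_mul, zero_add]
    have hwre : w.re ≤ (n : ℝ) / 2 := by
      have hweq : w = z * g.derivative.eval z / g.eval z := by
        rw [hw, hderiv, eval_mul, eval_C, hfeval]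
        field_simp
      rw [hweq, ← hcard]
      exact el_logDeriv_re_le z hz f.roots hr hgz
    have hkey : w * f.eval z = z * f.derivative.eval z := by
      rw [hw]
      field_simp
    have hwabs : ‖w‖ ≤ ‖(n:ℂ) - w‖ := by
      rw [Complex.norm_def, Complex.norm_def]
      apply Real.sqrt_le_sqrt
      simp only [Complex.normSq_apply, Complex.sub_re, Complex.sub_im, Complex.natCast_re,
        Complex.natCast_im, zero_sub]
      nlinarith [hwre, Nat.cast_nonneg (α := ℝ) n]
    have e1 : ‖f.derivative.eval z‖ = ‖w‖ * ‖f.eval z‖ := by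
      rw [← norm_mul, hkey, norm_mul, hz, one_mul]
    have e2 : ‖(n:ℂ) * f.eval z - z * f.derivative.eval z‖
        = ‖(n:ℂ) - w‖ * ‖f.eval z‖ := by
      rw [← norm_mul, sub_mul, hkey]
    rw [e1, e2]
    exact mul_le_mul_of_nonneg_right hwabs (norm_nonneg _)

private lemma el_lemB (n : ℕ) (hn : 1 ≤ n) (f : ℂ[X]) (hd : f.natDegree = n) (M : ℝ)
    (hM : ∀ w : ℂ, ‖w‖ ≤ 1 → ‖f.eval w‖ ≤ M) (z : ℂ)
    (hz : ‖z‖ = 1) :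
    ‖f.derivative.eval z‖ +
      ‖(n:ℂ) * f.eval z - z * f.derivative.eval z‖ ≤ n * M := by
  have hM0 : 0 ≤ M := le_trans (norm_nonneg _) (hM 0 (by simp))
  have hnR : (0:ℝ) < n := by exact_mod_cast hn
  have key : ∀ lam : ℂ, M < ‖lam‖ →
      ‖f.derivative.eval z‖ ≤
        ‖(n:ℂ) * f.eval z - z * f.derivative.eval z - n * lam‖ := by
    intro lam hlam
    have hd1 : (f - C lam).natDegree = n := by rw [natDegree_sub_C, hd]
    have hne : f - C lam ≠ 0 := by
      intro h
      rw [h, natDegree_zero] at hd1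
      omega
    have hroots : ∀ r ∈ (f - C lam).roots, 1 ≤ ‖r‖ := by
      intro r hrr
      by_contra hcon
      push_neg at hcon
      have hev : (f - C lam).eval r = 0 := IsRoot.eq_zero (isRoot_of_mem_roots hrr)
      rw [eval_sub, eval_C, sub_eq_zero] at hev
      have := hM r hcon.le
      rw [hev] at this
      linarith
    have h := el_lemA n (f - C lam) hd1 hne hroots z hz
    rw [derivative_sub, derivative_C, sub_zero] at h
    rw [eval_sub, eval_C] at h
    calc ‖f.derivative.eval z‖ ≤
        ‖(n:ℂ) * (f.eval z - lam) - z * f.derivative.eval z‖ := h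
      _ = ‖(n:ℂ) * f.eval z - z * f.derivative.eval z - n * lam‖ := by
        ring_nf
  set u : ℂ := (n:ℂ) * f.eval z - z * f.derivative.eval z with hu
  have huM : ‖u‖ ≤ n * M := by
    by_contra hcon
    push_neg at hcon
    have hlam : M < ‖u / n‖ := by
      rw [norm_div]
      simp only [Complex.norm_natCast]
      rw [lt_div_iff₀ hnR]
      linarith
    have hnC : (n:ℂ) ≠ 0 := Nat.cast_ne_zero.2 (by omega)
    have h := key (u / n) hlam
    have : (n:ℂ) * (u / n) = u := by
      rw [mul_comm, div_mul_cancel₀ _ hnC]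
    rw [this, sub_self, norm_zero] at h
    have hf'z : f.derivative.eval z = 0 := by
      have h2 := norm_nonneg (f.derivative.eval z)
      have h3 : ‖f.derivative.eval z‖ = 0 := le_antisymm h h2
      exact norm_eq_zero.1 h3
    rw [hu, hf'z, mul_zero, sub_zero, norm_mul, Complex.norm_natCast] at hcon
    have := hM z hz.le
    nlinarith
  have hfinal : ∀ ε : ℝ, 0 < ε →
      ‖f.derivative.eval z‖ + ‖u‖ ≤ n * (M + ε) := by
    intro ε hε
    by_cases hu0 : u = 0
    · rw [hu0, norm_zero, add_zero]
      have hlam : M < ‖((M + ε : ℝ) : ℂ)‖ := by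
        rw [Complex.norm_real, Real.norm_eq_abs, abs_of_nonneg (by linarith)]
        linarith
      have h := key ((M + ε : ℝ) : ℂ) hlam
      rw [hu0, zero_sub, norm_neg, norm_mul, Complex.norm_natCast,
        Complex.norm_real, Real.norm_eq_abs, abs_of_nonneg (by linarith)] at h
      exact h
    · set lam : ℂ := (((M + ε) / ‖u‖ : ℝ) : ℂ) * u with hlam_def
      have habsu : (0:ℝ) < ‖u‖ := norm_pos_iff.2 hu0
      have hlamabs : ‖lam‖ = M + ε := by
        rw [hlam_def, norm_mul, Complex.norm_real, Real.norm_eq_abs, abs_of_nonneg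
          (by positivity), div_mul_cancel₀ _ (ne_of_gt habsu)]
      have h := key lam (by rw [hlamabs]; linarith)
      have hrw : u - (n:ℂ) * lam = ((1 - (n:ℝ) * ((M + ε) / ‖u‖) : ℝ) : ℂ) * u := by
        rw [hlam_def]
        push_cast
        ring
      rw [hrw, norm_mul, Complex.norm_real, Real.norm_eq_abs] at h
      have habs1 : |1 - (n:ℝ) * ((M + ε) / ‖u‖)|
          = (n:ℝ) * ((M + ε) / ‖u‖) - 1 := by
        rw [abs_of_nonpos]
        · ring
        · rw [sub_nonpos, ← mul_div_assoc, le_div_iff₀ habsu, one_mul]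
          nlinarith
      rw [habs1] at h
      have hexp : ((n:ℝ) * ((M + ε) / ‖u‖) - 1) * ‖u‖
          = n * (M + ε) - ‖u‖ := by
        field_simp
      rw [hexp] at h
      linarith
  by_contra hcon
  push_neg at hcon
  set ε : ℝ := (‖f.derivative.eval z‖ + ‖u‖ - n * M) / (2 * n) with hε
  have hε0 : 0 < ε := by
    apply div_pos
    · linarith
    · linarith
  have hfin := hfinal ε hε0
  have hexp : (n:ℝ) * (M + ε) = n * M +
      (‖f.derivative.eval z‖ + ‖u‖ - n * M) / 2 := by
    rw [hε]
    field_simp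
  rw [hexp] at hfin
  linarith

private lemma el_erdosLaxComplex (n : ℕ) (hn : 1 ≤ n) (f : ℂ[X]) (hd : f.natDegree = n)
    (hf0 : ∀ ζ : ℂ, ‖ζ‖ < 1 → f.eval ζ ≠ 0) (M : ℝ)
    (hM : ∀ w : ℂ, ‖w‖ ≤ 1 → ‖f.eval w‖ ≤ M)
    (ζ : ℂ) (hζ : ‖ζ‖ ≤ 1) :
    ‖f.derivative.eval ζ‖ ≤ (n:ℝ) / 2 * M := by
  have hfne : f ≠ 0 := by
    intro h
    exact hf0 0 (by simp) (by rw [h]; simp)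
  have hbound : ∀ z : ℂ, ‖z‖ = 1 →
      ‖f.derivative.eval z‖ ≤ (n:ℝ) / 2 * M := by
    intro z hz
    have hroots : ∀ r ∈ f.roots, 1 ≤ ‖r‖ := by
      intro r hrr
      by_contra hcon
      push_neg at hcon
      exact hf0 r hcon (IsRoot.eq_zero (isRoot_of_mem_roots hrr))
    have hA := el_lemA n f hd hfne hroots z hz
    have hB := el_lemB n hn f hd M hM z hz
    linarith
  have hdiff : DiffContOnCl ℂ (fun w => f.derivative.eval w) (Metric.ball (0:ℂ) 1) :=
    (f.derivative.differentiable).diffContOnCl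
  have hfr : ∀ w ∈ frontier (Metric.ball (0:ℂ) 1),
      ‖f.derivative.eval w‖ ≤ (n:ℝ) / 2 * M := by
    intro w hw
    rw [frontier_ball (0:ℂ) one_ne_zero] at hw
    rw [mem_sphere_iff_norm, sub_zero] at hw
    exact hbound w hw
  have hcl : ζ ∈ closure (Metric.ball (0:ℂ) 1) := by
    rw [closure_ball (0:ℂ) one_ne_zero, Metric.mem_closedBall, dist_zero_right]
    exact hζ
  have hfin := Complex.norm_le_of_forall_mem_frontier_norm_le Metric.isBounded_ball hdiff hfr hcl
  exact hfin

/-! ### Main theorem -/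

/-- **Erdős–Lax inequality** for a subclass of quaternionic polynomials:
if all coefficients of `P(q) = ∑_{j=0}^n q^j a_j` (of degree `n`) lie in a slice
`ℂ_I = {x + yI}` for some imaginary unit `I`, and `P` has no zero in the open unit
disk of that slice, then `max_{‖q‖ ≤ 1} ‖P'(q)‖ ≤ (n/2) * max_{‖q‖ ≤ 1} ‖P(q)‖`. -/
theorem erdos_lax_quaternion (n : ℕ) (a : ℕ → ℍ[ℝ]) (han : a n ≠ 0)
    (I : ℍ[ℝ]) (hI : I ^ 2 = -1)
    (hcoef : ∀ j ≤ n, ∃ x y : ℝ, a j = (x : ℍ[ℝ]) + y • I)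
    (hzero : ∀ z : ℍ[ℝ], (∃ x y : ℝ, z = (x : ℍ[ℝ]) + y • I) → ‖z‖ < 1 →
        ∑ j ∈ Finset.range (n + 1), z ^ j * a j ≠ 0) :
    sSup {y : ℝ | ∃ q : ℍ[ℝ], ‖q‖ ≤ 1 ∧
        y = ‖∑ j ∈ Finset.range (n + 1), q ^ (j - 1) * (j : ℍ[ℝ]) * a j‖} ≤
      (n : ℝ) / 2 * sSup {y : ℝ | ∃ q : ℍ[ℝ], ‖q‖ ≤ 1 ∧
        y = ‖∑ j ∈ Finset.range (n + 1), q ^ j * a j‖} := by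
  rcases Nat.eq_zero_or_pos n with hn0 | hn
  · subst hn0
    have hz : ∀ q : ℍ[ℝ], ∑ j ∈ Finset.range (0 + 1), q ^ (j - 1) * (j : ℍ[ℝ]) * a j = 0 := by
      intro q
      simp
    rw [Nat.cast_zero, zero_div, zero_mul]
    apply Real.sSup_le _ le_rfl
    rintro yv ⟨q, hq, rfl⟩
    rw [hz q, norm_zero]
  · -- coefficient representation
    have hrep : ∀ j : ℕ, ∃ xy : ℝ × ℝ,
        (j ≤ n → a j = ((xy.1 : ℝ) : ℍ[ℝ]) + xy.2 • I) := by
      intro j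
      by_cases h : j ≤ n
      · obtain ⟨x, y, hxy⟩ := hcoef j h
        exact ⟨(x, y), fun _ => hxy⟩
      · exact ⟨(0, 0), fun h' => absurd h' h⟩
    choose xy hxy using hrep
    set c : ℕ → ℂ := fun j => ((xy j).1 : ℂ) + ((xy j).2 : ℂ) * Complex.I with hc
    have hslqc : ∀ j ≤ n, elSlq I (c j) = a j := by
      intro j hj
      rw [hxy j hj, hc]
      simp [elSlq]
    have hcn : c n ≠ 0 := by
      intro h
      apply han
      rw [← hslqc n le_rfl, h]
      simp [elSlq]
    set p : Polynomial ℂ := ∑ j ∈ Finset.range (n+1), Polynomial.monomial j (c j) with hp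
    have hpcoeff : p.coeff n = c n := by
      rw [hp, Polynomial.finset_sum_coeff]
      simp only [Polynomial.coeff_monomial]
      rw [Finset.sum_ite_eq' (Finset.range (n+1)) n c]
      simp
    have hpdeg : p.natDegree = n := by
      apply le_antisymm
      · apply Polynomial.natDegree_sum_le_of_forall_le
        intro j hj
        exact le_trans (Polynomial.natDegree_monomial_le _)
          (Nat.lt_succ_iff.1 (Finset.mem_range.1 hj))
      · exact Polynomial.le_natDegree_of_ne_zero (hpcoeff ▸ hcn)
    have hpeval : ∀ w : ℂ, p.eval w = ∑ j ∈ Finset.range (n+1), w^j * c j := by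
      intro w
      rw [hp, Polynomial.eval_finset_sum]
      exact Finset.sum_congr rfl fun j _ => by rw [Polynomial.eval_monomial, mul_comm]
    have hslq_eval : ∀ w : ℂ,
        elSlq I (p.eval w) = ∑ j ∈ Finset.range (n+1), (elSlq I w)^j * a j := by
      intro w
      rw [hpeval w, elSlq_sum]
      refine Finset.sum_congr rfl fun j hj => ?_
      rw [elSlq_mul I hI, elSlq_pow I hI, hslqc j (Nat.lt_succ_iff.1 (Finset.mem_range.1 hj))]
    have hf0 : ∀ ζ : ℂ, ‖ζ‖ < 1 → p.eval ζ ≠ 0 := by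
      intro ζ hζ h0
      apply hzero (elSlq I ζ) ⟨ζ.re, ζ.im, rfl⟩ (by rw [el_norm_slq I hI]; exact hζ)
      rw [← hslq_eval ζ, h0]
      simp [elSlq]
    set S := sSup {y : ℝ | ∃ q : ℍ[ℝ], ‖q‖ ≤ 1 ∧
        y = ‖∑ j ∈ Finset.range (n + 1), q ^ j * a j‖} with hS
    have hsetS : {y : ℝ | ∃ q : ℍ[ℝ], ‖q‖ ≤ 1 ∧
        y = ‖∑ j ∈ Finset.range (n + 1), q ^ j * a j‖}
        = (fun q : ℍ[ℝ] => ‖∑ j ∈ Finset.range (n + 1), q ^ j * a j‖) ''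
          (Metric.closedBall 0 1) := by
      ext yv
      simp only [Set.mem_setOf_eq, Set.mem_image, Metric.mem_closedBall, dist_zero_right]
      constructor
      · rintro ⟨q, h1, h2⟩; exact ⟨q, h1, h2.symm⟩
      · rintro ⟨q, h1, h2⟩; exact ⟨q, h1, h2.symm⟩
    have hBdd : BddAbove {y : ℝ | ∃ q : ℍ[ℝ], ‖q‖ ≤ 1 ∧
        y = ‖∑ j ∈ Finset.range (n + 1), q ^ j * a j‖} := by
      rw [hsetS]
      apply IsCompact.bddAbove_image (isCompact_closedBall _ _)
      apply Continuous.continuousOn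
      apply Continuous.norm
      exact continuous_finset_sum _ (fun j _ => (continuous_pow j).mul continuous_const)
    have hmem : ∀ q : ℍ[ℝ], ‖q‖ ≤ 1 →
        ‖∑ j ∈ Finset.range (n + 1), q ^ j * a j‖ ≤ S :=
      fun q hq => le_csSup hBdd ⟨q, hq, rfl⟩
    have hS0 : 0 ≤ S := le_trans (norm_nonneg _) (hmem 0 (by simp))
    have hM : ∀ w : ℂ, ‖w‖ ≤ 1 → ‖p.eval w‖ ≤ S := by
      intro w hw
      calc ‖p.eval w‖ = ‖elSlq I (p.eval w)‖ := (el_norm_slq I hI _).symm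
        _ = ‖∑ j ∈ Finset.range (n+1), (elSlq I w)^j * a j‖ := by rw [hslq_eval]
        _ ≤ S := hmem _ (by rw [el_norm_slq I hI]; exact hw)
    set b : ℕ → ℍ[ℝ] := fun k => (((k+1 : ℕ)) : ℍ[ℝ]) * a (k+1) with hb_def
    have hpd : ∀ w : ℂ, p.derivative.eval w
        = ∑ k ∈ Finset.range n, w^k * (((k+1:ℕ) : ℂ) * c (k+1)) := by
      intro w
      rw [hp, Polynomial.derivative_sum, Polynomial.eval_finset_sum]
      have hterm : ∀ j ∈ Finset.range (n+1),
          (Polynomial.derivative (Polynomial.monomial j (c j))).eval w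
            = c j * j * w^(j-1) := fun j _ => by
        rw [Polynomial.derivative_monomial, Polynomial.eval_monomial]
      rw [Finset.sum_congr rfl hterm, Finset.sum_range_succ']
      simp only [Nat.cast_zero, mul_zero, zero_mul, add_zero, Nat.add_sub_cancel]
      exact Finset.sum_congr rfl fun k _ => by push_cast; ring
    have hslq_deval : ∀ w : ℂ,
        elSlq I (p.derivative.eval w) = ∑ k ∈ Finset.range n, (elSlq I w)^k * b k := by
      intro w
      rw [hpd w, elSlq_sum]
      refine Finset.sum_congr rfl fun k hk => ?_
      rw [elSlq_mul I hI, elSlq_pow I hI, elSlq_mul I hI, hb_def]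
      congr 1
      congr 1
      · rw [show (((k+1:ℕ)):ℂ) = (((k+1:ℕ) : ℝ) : ℂ) from by push_cast; ring, elSlq_coe]
        push_cast
        ring
      · exact hslqc (k+1) (Finset.mem_range.1 hk)
    have hbrep : ∀ k < n, b k
        = (((((k+1:ℕ)):ℝ) * (xy (k+1)).1 : ℝ) : ℍ[ℝ])
          + ((((k+1:ℕ)):ℝ) * (xy (k+1)).2) • I := by
      intro k hk
      rw [hb_def]
      simp only
      rw [hxy (k+1) hk]
      ext <;>
        simp [Quaternion.re_mul, Quaternion.imI_mul, Quaternion.imJ_mul,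
          Quaternion.imK_mul] <;>
        push_cast <;> ring
    apply Real.sSup_le
    · rintro yv ⟨q, hq, rfl⟩
      have hre : ∑ j ∈ Finset.range (n + 1), q ^ (j - 1) * (j : ℍ[ℝ]) * a j
          = ∑ k ∈ Finset.range n, q ^ k * b k := by
        rw [Finset.sum_range_succ']
        simp only [Nat.cast_zero, mul_zero, zero_mul, add_zero, Nat.add_sub_cancel,
          Nat.cast_succ]
        refine Finset.sum_congr rfl fun k _ => ?_
        rw [hb_def]
        simp only
        rw [mul_assoc]
        push_cast
        ring_nf
      rw [hre]
      obtain ⟨z, hzabs, hzle⟩ := el_sliceBound I hI n b _ _ hbrep q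
      refine le_trans hzle ?_
      rw [← hslq_deval z, el_norm_slq I hI]
      exact el_erdosLaxComplex n hn p hpdeg hf0 S hM z (by rw [hzabs]; exact hq)
    · exact mul_nonneg (by positivity) hS0
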